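/- Let s ∈ ℝ and let Σ₀ be a positive semidefinite (p-1)×(p-1) matrix with first basis vector e₁. Suppose for all z ∈ ℝ and v = (v_1,…,v_{p-1}) ∈ ℝ^{p-1}: s·(z² − z·v_1) + v^T Σ₀ v ≥ 0. If Σ₀ is degenerate with a kernel vector u satisfying u_1 ≠ 0, then s = 0. -/

import Mathlib

theorem stmt_11 (n : ℕ) (s : ℝ) (S : Matrix (Fin (n + 1)) (Fin (n + 1)) ℝ)
    (hS : S.PosSemidef)
    (h : ∀ (z : ℝ) (v : Fin (n + 1) → ℝ),
      0 ≤ s * (z ^ 2 - z * v 0) + dotProduct v (S.mulVec v))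
    (u : Fin (n + 1) → ℝ) (hu : S.mulVec u = 0) (hu0 : u 0 ≠ 0) :
    s = 0 := by
  have h1 : 0 ≤ s := by
    have := h 1 0
    simpa using this
  have h2 : s ≤ 0 := by
    have hv : S.mulVec ((2 / u 0) • u) = 0 := by
      rw [Matrix.mulVec_smul, hu, smul_zero]
    have := h 1 ((2 / u 0) • u)
    rw [hv] at this
    simp only [dotProduct_zero, add_zero, Pi.smul_apply, smul_eq_mul] at this
    rw [div_mul_cancel₀ _ hu0] at this
    nlinarith
  linarith
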